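/- Let σ ∈ ℝⁿ have non-negative entries, let P(σ) be the permutahedron generated by σ, let Ω : ℝⁿ → ℝ, and for ν > 0 define h_{νΩ}(l) := max_{λ ∈ P(σ)} { ⟨λ, l⟩ − ν Ω(λ) }. Then: (i) for every l, l' ∈ ℝⁿ and every p ∈ [1, ∞], |h_{νΩ}(l) − h_{νΩ}(l')| ≤ ‖σ‖_p ‖l − l'‖_{p'}, where p' is the Hölder conjugate of p (1/p + 1/p' = 1); and (ii) if Ω is 1-strongly convex with respect to a norm ‖·‖ on ℝⁿ, then the maximizer λ_ν(l) := argmax_{λ ∈ P(σ)} { ⟨λ, l⟩ − ν Ω(λ) } is unique for every l, and ‖λ_ν(l) − λ_ν(l')‖ ≤ ‖l − l'‖_* / ν for all l, l', where ‖·‖_* is the dual norm of ‖·‖. -/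

import Mathlib

open scoped ENNReal

/-- The permutahedron generated by `σ`: the image of `σ` under all doubly stochastic
matrices. -/
def permutahedron {n : ℕ} (σ : Fin n → ℝ) : Set (Fin n → ℝ) :=
  {lam | ∃ P : Matrix (Fin n) (Fin n) ℝ,
    (∀ i j, P i j ∈ Set.Icc (0 : ℝ) 1) ∧ (∀ i, ∑ j, P i j = 1) ∧ (∀ j, ∑ i, P i j = 1) ∧
    lam = P.mulVec σ}

/-- The standard pairing `⟨a, b⟩ = ∑ᵢ aᵢ bᵢ` on `ℝⁿ`. -/
def dotp {n : ℕ} (a b : Fin n → ℝ) : ℝ := ∑ i, a i * b i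

/-- `h_{νΩ}(l) = max_{λ ∈ P(σ)} { ⟨λ, l⟩ − ν Ω(λ) }` (via `sSup`). -/
noncomputable def smoothedMax {n : ℕ} (σ : Fin n → ℝ) (Om : (Fin n → ℝ) → ℝ) (ν : ℝ)
    (l : Fin n → ℝ) : ℝ :=
  sSup ((fun lam => dotp lam l - ν * Om lam) '' permutahedron σ)

/-- Subgradients of `Ω` at `x` with respect to the pairing `dotp`. -/
def subgrad {n : ℕ} (Om : (Fin n → ℝ) → ℝ) (x : Fin n → ℝ) : Set (Fin n → ℝ) :=
  {g | ∀ y, Om x + dotp g (y - x) ≤ Om y}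

/-- The dual norm `‖z‖_* = sup {⟨z, x⟩ : N(x) ≤ 1}` of a norm `N`. -/
noncomputable def dualNorm {n : ℕ} (N : (Fin n → ℝ) → ℝ) (z : Fin n → ℝ) : ℝ :=
  sSup ((fun x => dotp z x) '' {x | N x ≤ 1})

namespace Stmt12Aux

variable {n : ℕ}

lemma dotp_comm (a b : Fin n → ℝ) : dotp a b = dotp b a := by
  simp [dotp, mul_comm]

lemma dotp_add_right (a b c : Fin n → ℝ) : dotp a (b + c) = dotp a b + dotp a c := by
  simp [dotp, mul_add, Finset.sum_add_distrib]

lemma dotp_sub_right (a b c : Fin n → ℝ) : dotp a (b - c) = dotp a b - dotp a c := by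
  simp [dotp, mul_sub, Finset.sum_sub_distrib]

lemma dotp_smul_right (a : Fin n → ℝ) (c : ℝ) (b : Fin n → ℝ) :
    dotp a (c • b) = c * dotp a b := by
  unfold dotp
  rw [Finset.mul_sum]
  exact Finset.sum_congr rfl fun i _ => by
    simp [mul_comm, mul_left_comm]

lemma dotp_zero_right (a : Fin n → ℝ) : dotp a 0 = 0 := by simp [dotp]

lemma abs_dotp_le (a b : Fin n → ℝ) : |dotp a b| ≤ ∑ i, |a i| * |b i| := by
  refine (Finset.abs_sum_le_sum_abs _ _).trans ?_
  simp [abs_mul, le_refl]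

lemma self_mem_permutahedron (σ : Fin n → ℝ) : σ ∈ permutahedron σ := by
  refine ⟨1, fun i j => ?_, fun i => ?_, fun j => ?_, ?_⟩
  · by_cases h : i = j <;> simp [Matrix.one_apply, h]
  · simp [Matrix.one_apply]
  · simp [Matrix.one_apply]
  · simp [Matrix.one_mulVec]

lemma permutahedron_nonempty (σ : Fin n → ℝ) : (permutahedron σ).Nonempty :=
  ⟨σ, self_mem_permutahedron σ⟩

lemma mem_coords {σ lam : Fin n → ℝ} (h : lam ∈ permutahedron σ) :
    ∃ P : Matrix (Fin n) (Fin n) ℝ,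
      (∀ i j, 0 ≤ P i j) ∧ (∀ i j, P i j ≤ 1) ∧ (∀ i, ∑ j, P i j = 1) ∧
      (∀ j, ∑ i, P i j = 1) ∧ ∀ i, lam i = ∑ j, P i j * σ j := by
  obtain ⟨P, hbox, hrow, hcol, rfl⟩ := h
  exact ⟨P, fun i j => (hbox i j).1, fun i j => (hbox i j).2, hrow, hcol,
    fun i => rfl⟩

lemma perm_nonneg {σ lam : Fin n → ℝ} (hσ : ∀ i, 0 ≤ σ i) (h : lam ∈ permutahedron σ) :
    ∀ i, 0 ≤ lam i := by
  obtain ⟨P, h0, h1, hrow, hcol, hl⟩ := mem_coords h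
  intro i
  rw [hl i]
  exact Finset.sum_nonneg fun j _ => mul_nonneg (h0 i j) (hσ j)

lemma perm_convex (σ : Fin n → ℝ) : Convex ℝ (permutahedron σ) := by
  rintro x ⟨P, hP, hPr, hPc, rfl⟩ y ⟨Q, hQ, hQr, hQc, rfl⟩ a b ha hb hab
  refine ⟨a • P + b • Q, fun i j => ?_, fun i => ?_, fun j => ?_, ?_⟩
  · have h1 := (hP i j).1; have h2 := (hP i j).2
    have h3 := (hQ i j).1; have h4 := (hQ i j).2
    constructor
    · simp only [Matrix.add_apply, Matrix.smul_apply, smul_eq_mul]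
      positivity
    · simp only [Matrix.add_apply, Matrix.smul_apply, smul_eq_mul]
      nlinarith
  · simp only [Matrix.add_apply, Matrix.smul_apply, smul_eq_mul, Finset.sum_add_distrib,
      ← Finset.mul_sum, hPr i, hQr i, mul_one, hab]
  · simp only [Matrix.add_apply, Matrix.smul_apply, smul_eq_mul, Finset.sum_add_distrib,
      ← Finset.mul_sum, hPc j, hQc j, mul_one, hab]
  · rw [Matrix.add_mulVec, Matrix.smul_mulVec, Matrix.smul_mulVec]

lemma perm_compact (σ : Fin n → ℝ) : IsCompact (permutahedron σ) := by
  have hK : IsCompact {P : Matrix (Fin n) (Fin n) ℝ |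
      (∀ i j, P i j ∈ Set.Icc (0 : ℝ) 1) ∧ (∀ i, ∑ j, P i j = 1) ∧ (∀ j, ∑ i, P i j = 1)} := by
    have hbig : IsCompact (Set.univ.pi fun _ : Fin n => Set.univ.pi fun _ : Fin n =>
        Set.Icc (0 : ℝ) 1) :=
      isCompact_univ_pi fun _ => isCompact_univ_pi fun _ => isCompact_Icc
    refine IsCompact.of_isClosed_subset hbig ?_ ?_
    · have h1 : IsClosed {P : Matrix (Fin n) (Fin n) ℝ | ∀ i j, P i j ∈ Set.Icc (0:ℝ) 1} := by
        have : {P : Matrix (Fin n) (Fin n) ℝ | ∀ i j, P i j ∈ Set.Icc (0:ℝ) 1} =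
            ⋂ i, ⋂ j, {P : Matrix (Fin n) (Fin n) ℝ | P i j ∈ Set.Icc (0:ℝ) 1} := by
          ext P; simp [Set.mem_iInter]
        rw [this]
        refine isClosed_iInter fun i => isClosed_iInter fun j => ?_
        exact IsClosed.preimage ((continuous_apply j).comp (continuous_apply i)) isClosed_Icc
      have h2 : IsClosed {P : Matrix (Fin n) (Fin n) ℝ | ∀ i, ∑ j, P i j = 1} := by
        have : {P : Matrix (Fin n) (Fin n) ℝ | ∀ i, ∑ j, P i j = 1} =
            ⋂ i, {P : Matrix (Fin n) (Fin n) ℝ | ∑ j, P i j = 1} := by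
          ext P; simp [Set.mem_iInter]
        rw [this]
        refine isClosed_iInter fun i => isClosed_eq ?_ continuous_const
        exact continuous_finset_sum _ fun j _ => (continuous_apply j).comp (continuous_apply i)
      have h3 : IsClosed {P : Matrix (Fin n) (Fin n) ℝ | ∀ j, ∑ i, P i j = 1} := by
        have : {P : Matrix (Fin n) (Fin n) ℝ | ∀ j, ∑ i, P i j = 1} =
            ⋂ j, {P : Matrix (Fin n) (Fin n) ℝ | ∑ i, P i j = 1} := by
          ext P; simp [Set.mem_iInter]
        rw [this]
        refine isClosed_iInter fun j => isClosed_eq ?_ continuous_const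
        exact continuous_finset_sum _ fun i _ => (continuous_apply j).comp (continuous_apply i)
      exact h1.inter (h2.inter h3)
    · rintro P ⟨hbox, -, -⟩ i _ j _
      exact hbox i j
  have hcont : Continuous fun P : Matrix (Fin n) (Fin n) ℝ => P.mulVec σ := by
    refine continuous_pi fun i => ?_
    have : (fun P : Matrix (Fin n) (Fin n) ℝ => P.mulVec σ i) =
        fun P : Matrix (Fin n) (Fin n) ℝ => ∑ j, P i j * σ j := by
      funext P
      simp [Matrix.mulVec, dotProduct]
    rw [this]
    exact continuous_finset_sum _ fun j _ =>
      ((continuous_apply j).comp (continuous_apply i) :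
        Continuous fun P : Matrix (Fin n) (Fin n) ℝ => P i j).mul continuous_const
  have himg : permutahedron σ = (fun P : Matrix (Fin n) (Fin n) ℝ => P.mulVec σ) ''
      {P | (∀ i j, P i j ∈ Set.Icc (0 : ℝ) 1) ∧ (∀ i, ∑ j, P i j = 1) ∧
        (∀ j, ∑ i, P i j = 1)} := by
    ext lam
    constructor
    · rintro ⟨P, h1, h2, h3, rfl⟩; exact ⟨P, ⟨h1, h2, h3⟩, rfl⟩
    · rintro ⟨P, ⟨h1, h2, h3⟩, rfl⟩; exact ⟨P, h1, h2, h3, rfl⟩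
  rw [himg]
  exact hK.image hcont


lemma equiv_symm_apply (p : ℝ≥0∞) (x : Fin n → ℝ) (i : Fin n) :
    (WithLp.equiv p (Fin n → ℝ)).symm x i = x i := rfl

lemma norm_infty_eq (x : Fin n → ℝ) :
    ‖(WithLp.equiv ∞ (Fin n → ℝ)).symm x‖ = ⨆ i, |x i| := by
  rw [PiLp.norm_eq_ciSup]
  simp [equiv_symm_apply, Real.norm_eq_abs]

lemma norm_fin_eq {p : ℝ≥0∞} (hp : 0 < p.toReal) (x : Fin n → ℝ) :
    ‖(WithLp.equiv p (Fin n → ℝ)).symm x‖ =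
      (∑ i, |x i| ^ p.toReal) ^ (1 / p.toReal) := by
  rw [PiLp.norm_eq_sum hp]
  simp [equiv_symm_apply, Real.norm_eq_abs]

lemma norm_one_eq (x : Fin n → ℝ) :
    ‖(WithLp.equiv 1 (Fin n → ℝ)).symm x‖ = ∑ i, |x i| := by
  rw [norm_fin_eq (by simp)]
  simp

lemma pilp_norm_nonneg {p : ℝ≥0∞} (hp : 1 ≤ p) (x : Fin n → ℝ) :
    0 ≤ ‖(WithLp.equiv p (Fin n → ℝ)).symm x‖ := by
  rcases eq_or_ne p ∞ with rfl | hptop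
  · rw [norm_infty_eq]
    exact Real.iSup_nonneg fun i => abs_nonneg _
  · have hp0 : 0 < p.toReal :=
      ENNReal.toReal_pos (zero_lt_one.trans_le hp).ne' hptop
    rw [norm_fin_eq hp0]
    positivity

/-- Hölder's inequality in the `PiLp` setting. -/
lemma holder {p q : ℝ≥0∞} (hpq : p.HolderConjugate q) (a b : Fin n → ℝ) :
    |dotp a b| ≤ ‖(WithLp.equiv p (Fin n → ℝ)).symm a‖ *
      ‖(WithLp.equiv q (Fin n → ℝ)).symm b‖ := by
  refine (abs_dotp_le a b).trans ?_
  rcases eq_or_ne p ∞ with rfl | hptop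
  · -- q = 1
    have hq : q = 1 := by
      have := ENNReal.HolderConjugate.inv_add_inv_eq_one ∞ q
      simp at this
      simpa using congrArg (·⁻¹) this
    subst hq
    rw [norm_infty_eq, norm_one_eq, Finset.mul_sum]
    refine Finset.sum_le_sum fun i _ => ?_
    exact mul_le_mul_of_nonneg_right
      (le_ciSup (f := fun i => |a i|) (Set.Finite.bddAbove (Set.finite_range _)) i)
      (abs_nonneg _)
  rcases eq_or_ne q ∞ with rfl | hqtop
  · have hp : p = 1 := by
      have := ENNReal.HolderConjugate.inv_add_inv_eq_one p ∞
      simp at this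
      simpa using congrArg (·⁻¹) this
    subst hp
    rw [norm_infty_eq, norm_one_eq]
    rw [mul_comm, Finset.mul_sum]
    refine Finset.sum_le_sum fun i _ => ?_
    rw [mul_comm (|a i|) (|b i|)]
    exact mul_le_mul_of_nonneg_right
      (le_ciSup (f := fun i => |b i|) (Set.Finite.bddAbove (Set.finite_range _)) i)
      (abs_nonneg _)
  · -- both finite
    have hp1 : 1 < p := by
      rcases lt_or_eq_of_le (ENNReal.HolderConjugate.one_le p q) with h | h
      · exact h
      · exfalso
        have h2 := ENNReal.HolderConjugate.inv_add_inv_eq_one p q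
        rw [← h] at h2
        simp at h2
        have : q⁻¹ = 0 := by
          have h3 : (1:ℝ≥0∞) + q⁻¹ = 1 + 0 := by simpa using h2
          exact (ENNReal.add_right_inj (by simp)).mp h3
        exact hqtop (ENNReal.inv_eq_zero.mp this)
    have hq1 : 1 < q := by
      rcases lt_or_eq_of_le (ENNReal.HolderConjugate.one_le q p) with h | h
      · exact h
      · exfalso
        have h2 := ENNReal.HolderConjugate.inv_add_inv_eq_one q p
        rw [← h] at h2
        simp at h2
        have : p⁻¹ = 0 := by
          have h3 : (1:ℝ≥0∞) + p⁻¹ = 1 + 0 := by simpa using h2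
          exact (ENNReal.add_right_inj (by simp)).mp h3
        exact hptop (ENNReal.inv_eq_zero.mp this)
    have hr : (1:ℝ) < p.toReal := by
      rw [← ENNReal.toReal_one]
      exact ENNReal.toReal_strict_mono hptop hp1
    have hconj : p.toReal.HolderConjugate q.toReal := by
      rw [Real.holderConjugate_iff]
      constructor
      · exact hr
      · have := ENNReal.HolderConjugate.inv_add_inv_eq_one p q
        have h1 : (p⁻¹ + q⁻¹).toReal = (1:ℝ≥0∞).toReal := by rw [this]
        rw [ENNReal.toReal_add (by simp [ENNReal.HolderConjugate.ne_zero p q]) (by simp [ENNReal.HolderConjugate.ne_zero q p]),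
          ENNReal.toReal_inv, ENNReal.toReal_inv, ENNReal.toReal_one] at h1
        exact h1
    have hp0 : 0 < p.toReal := by linarith
    have hq0 : 0 < q.toReal := hconj.right_pos
    rw [norm_fin_eq hp0, norm_fin_eq hq0]
    have := Real.inner_le_Lp_mul_Lq (f := fun i => |a i|) (g := fun i => |b i|)
      (s := Finset.univ) hconj
    simpa [abs_abs] using this


/-- The `p`-norm of any element of the permutahedron is at most that of `σ`. -/
lemma perm_norm_le {σ lam : Fin n → ℝ} (hσ : ∀ i, 0 ≤ σ i) {p : ℝ≥0∞} (hp : 1 ≤ p)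
    (h : lam ∈ permutahedron σ) :
    ‖(WithLp.equiv p (Fin n → ℝ)).symm lam‖ ≤ ‖(WithLp.equiv p (Fin n → ℝ)).symm σ‖ := by
  obtain ⟨P, h0, h1, hrow, hcol, hl⟩ := mem_coords h
  have hlam_nonneg : ∀ i, 0 ≤ lam i := perm_nonneg hσ h
  rcases eq_or_ne p ∞ with rfl | hptop
  · rw [norm_infty_eq, norm_infty_eq]
    rcases isEmpty_or_nonempty (Fin n) with hn | hn
    · simp [iSup_of_empty']
    refine ciSup_le fun i => ?_
    have hle : ∀ j, σ j ≤ ⨆ k, |σ k| := fun j =>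
      (le_abs_self _).trans
        (le_ciSup (f := fun k => |σ k|) (Set.Finite.bddAbove (Set.finite_range _)) j)
    have hS : (0:ℝ) ≤ ⨆ k, |σ k| := (hσ (Classical.arbitrary _)).trans (hle _)
    rw [abs_of_nonneg (hlam_nonneg i), hl i]
    calc ∑ j, P i j * σ j ≤ ∑ j, P i j * (⨆ k, |σ k|) :=
          Finset.sum_le_sum fun j _ => mul_le_mul_of_nonneg_left (hle j) (h0 i j)
      _ = ⨆ k, |σ k| := by rw [← Finset.sum_mul, hrow i, one_mul]
  · have hr0 : 0 < p.toReal := ENNReal.toReal_pos (zero_lt_one.trans_le hp).ne' hptop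
    have hr1 : (1:ℝ) ≤ p.toReal := by
      rw [← ENNReal.toReal_one]
      exact (ENNReal.toReal_le_toReal (by simp) hptop).mpr hp
    rw [norm_fin_eq hr0, norm_fin_eq hr0]
    refine Real.rpow_le_rpow (by positivity) ?_ (by positivity)
    calc ∑ i, |lam i| ^ p.toReal
        ≤ ∑ i, ∑ j, P i j * σ j ^ p.toReal := by
          refine Finset.sum_le_sum fun i _ => ?_
          rw [abs_of_nonneg (hlam_nonneg i), hl i]
          exact Real.rpow_arith_mean_le_arith_mean_rpow Finset.univ (fun j => P i j) σ
            (fun j _ => h0 i j) (hrow i) (fun j _ => hσ j) hr1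
      _ = ∑ j, (∑ i, P i j) * σ j ^ p.toReal := by
          rw [Finset.sum_comm]
          simp [Finset.sum_mul]
      _ = ∑ j, |σ j| ^ p.toReal := by
          refine Finset.sum_congr rfl fun j _ => ?_
          rw [hcol j, one_mul, abs_of_nonneg (hσ j)]

/-- Part (i). -/
lemma part_one {σ : Fin n → ℝ} (hσ : ∀ i, 0 ≤ σ i) (Om : (Fin n → ℝ) → ℝ) (ν : ℝ)
    (p q : ℝ≥0∞) (hp : 1 ≤ p) (hpq : 1 / p + 1 / q = 1) (l l' : Fin n → ℝ) :
    |smoothedMax σ Om ν l - smoothedMax σ Om ν l'| ≤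
      ‖(WithLp.equiv p (Fin n → ℝ)).symm σ‖ *
        ‖(WithLp.equiv q (Fin n → ℝ)).symm (l - l')‖ := by
  have hconj : p.HolderConjugate q := ENNReal.holderConjugate_iff.mpr (by simpa [one_div] using hpq)
  set C := ‖(WithLp.equiv p (Fin n → ℝ)).symm σ‖ *
    ‖(WithLp.equiv q (Fin n → ℝ)).symm (l - l')‖ with hC
  have hC0 : 0 ≤ C :=
    mul_nonneg (pilp_norm_nonneg hp _) (pilp_norm_nonneg (ENNReal.HolderConjugate.one_le q p) _)
  have key : ∀ lam ∈ permutahedron σ, |dotp lam (l - l')| ≤ C := by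
    intro lam hlam
    refine (holder hconj lam (l - l')).trans ?_
    exact mul_le_mul_of_nonneg_right (perm_norm_le hσ hp hlam)
      (pilp_norm_nonneg (ENNReal.HolderConjugate.one_le q p) _)
  set f := fun (m : Fin n → ℝ) (lam : Fin n → ℝ) => dotp lam m - ν * Om lam with hf
  have hdiff : ∀ (m m' : Fin n → ℝ) lam, f m lam = f m' lam + dotp lam (m - m') := by
    intro m m' lam
    simp only [hf, dotp_sub_right]
    ring
  have hbdd : ∀ m m' : Fin n → ℝ, (∀ lam ∈ permutahedron σ, |dotp lam (m - m')| ≤ C) →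
      BddAbove (f m' '' permutahedron σ) → BddAbove (f m '' permutahedron σ) := by
    rintro m m' hkey ⟨M, hM⟩
    refine ⟨M + C, ?_⟩
    rintro _ ⟨lam, hlam, rfl⟩
    have h1 : f m' lam ≤ M := hM ⟨lam, hlam, rfl⟩
    have h2 := (abs_le.mp (hkey lam hlam)).2
    rw [hdiff m m' lam]
    linarith
  have keyrev : ∀ lam ∈ permutahedron σ, |dotp lam (l' - l)| ≤ C := by
    intro lam hlam
    have h2 : dotp lam (l' - l) = -(dotp lam (l - l')) := by
      rw [dotp_sub_right, dotp_sub_right]; ring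
    rw [h2, abs_neg]
    exact key lam hlam
  have hne : ((fun lam => dotp lam l - ν * Om lam) '' permutahedron σ).Nonempty :=
    (permutahedron_nonempty σ).image _
  have hne' : ((fun lam => dotp lam l' - ν * Om lam) '' permutahedron σ).Nonempty :=
    (permutahedron_nonempty σ).image _
  rcases em (BddAbove (f l' '' permutahedron σ)) with hb | hb
  · have hbT : BddAbove (f l '' permutahedron σ) := hbdd l l' key hb
    have h1 : smoothedMax σ Om ν l ≤ smoothedMax σ Om ν l' + C := by
      show sSup (f l '' permutahedron σ) ≤ sSup (f l' '' permutahedron σ) + C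
      refine csSup_le hne ?_
      rintro _ ⟨lam, hlam, rfl⟩
      have hmem : f l' lam ≤ sSup (f l' '' permutahedron σ) := le_csSup hb ⟨lam, hlam, rfl⟩
      have h2 := (abs_le.mp (key lam hlam)).2
      rw [hdiff l l' lam]
      linarith
    have h2 : smoothedMax σ Om ν l' ≤ smoothedMax σ Om ν l + C := by
      show sSup (f l' '' permutahedron σ) ≤ sSup (f l '' permutahedron σ) + C
      refine csSup_le hne' ?_
      rintro _ ⟨lam, hlam, rfl⟩
      have hmem : f l lam ≤ sSup (f l '' permutahedron σ) := le_csSup hbT ⟨lam, hlam, rfl⟩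
      have h3 := (abs_le.mp (keyrev lam hlam)).2
      rw [hdiff l' l lam]
      linarith
    rw [abs_sub_le_iff]
    exact ⟨by linarith, by linarith⟩
  · have hbT : ¬ BddAbove (f l '' permutahedron σ) := fun hT => hb (hbdd l' l keyrev hT)
    have e1 : smoothedMax σ Om ν l = 0 := Real.sSup_of_not_bddAbove hbT
    have e2 : smoothedMax σ Om ν l' = 0 := Real.sSup_of_not_bddAbove hb
    rw [e1, e2, sub_zero, abs_zero]
    exact hC0


lemma dotp_single_expand (g z : Fin n → ℝ) (U : (Fin n → ℝ) →ₗ[ℝ] ℝ)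
    (hg : ∀ i, g i = U (Pi.single i 1)) : dotp g z = U z := by
  have hz : z = ∑ i, z i • (Pi.single i (1:ℝ) : Fin n → ℝ) := by
    funext j
    simp [Finset.sum_apply, Pi.single_apply]
  rw [dotp_comm]
  unfold dotp
  conv_rhs => rw [hz]
  rw [map_sum]
  refine Finset.sum_congr rfl fun i _ => ?_
  rw [map_smul, hg i]
  simp [mul_comm]

/-- Every convex function on `ℝⁿ` has a subgradient at every point. -/
lemma exists_subgrad (Om : (Fin n → ℝ) → ℝ) (hOm : ConvexOn ℝ Set.univ Om)
    (x : Fin n → ℝ) : ∃ g, g ∈ subgrad Om x := by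
  have hcont : Continuous Om :=
    continuousOn_univ.mp (hOm.continuousOn isOpen_univ)
  set A : Set ((Fin n → ℝ) × ℝ) := {p | Om p.1 < p.2} with hA
  have hopen : IsOpen A := isOpen_lt (hcont.comp continuous_fst) continuous_snd
  have hconv : Convex ℝ A := by
    rintro ⟨y1, t1⟩ h1 ⟨y2, t2⟩ h2 a b ha hb hab
    simp only [hA, Set.mem_setOf_eq] at h1 h2 ⊢
    have hle := hOm.2 (Set.mem_univ y1) (Set.mem_univ y2) ha hb hab
    show Om (a • y1 + b • y2) < a * t1 + b * t2
    have hstrict : a * Om y1 + b * Om y2 < a * t1 + b * t2 := by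
      rcases lt_or_eq_of_le ha with ha' | ha'
      · exact add_lt_add_of_lt_of_le ((mul_lt_mul_iff_right₀ ha').mpr h1)
          (mul_le_mul_of_nonneg_left h2.le hb)
      · have hb' : 0 < b := by linarith
        exact add_lt_add_of_le_of_lt (mul_le_mul_of_nonneg_left h1.le ha)
          ((mul_lt_mul_iff_right₀ hb').mpr h2)
    calc Om (a • y1 + b • y2) ≤ a * Om y1 + b * Om y2 := by simpa using hle
      _ < a * t1 + b * t2 := hstrict
  have hnot : ((x, Om x) : (Fin n → ℝ) × ℝ) ∉ A := by simp [hA]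
  obtain ⟨f, hf⟩ := geometric_hahn_banach_open_point hconv hopen hnot
  set c : ℝ := f (0, 1) with hc
  have hsplit : ∀ (y : Fin n → ℝ) (t : ℝ), f (y, t) = f (y, 0) + t * c := by
    intro y t
    have : ((y, t) : (Fin n → ℝ) × ℝ) = (y, 0) + t • (0, 1) := by
      simp [Prod.ext_iff]
    rw [this, map_add, map_smul]
    simp [hc]
  have hclt : c < 0 := by
    have h1 := hf (x, Om x + 1) (by simp [hA])
    rw [hsplit x (Om x + 1), hsplit x (Om x)] at h1
    nlinarith
  set U : (Fin n → ℝ) →ₗ[ℝ] ℝ :=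
    { toFun := fun y => f (y, 0)
      map_add' := fun y z => by
        show f (y + z, 0) = f (y, 0) + f (z, 0)
        have : ((y + z, 0) : (Fin n → ℝ) × ℝ) = (y, 0) + (z, 0) := by simp [Prod.ext_iff]
        rw [this, map_add]
      map_smul' := fun m y => by
        show f (m • y, 0) = m * f (y, 0)
        have : ((m • y, 0) : (Fin n → ℝ) × ℝ) = m • (y, 0) := by simp [Prod.ext_iff]
        rw [this, map_smul]; rfl } with hU
  set g : Fin n → ℝ := fun i => (-c)⁻¹ * U (Pi.single i 1) with hgdef
  refine ⟨g, fun y => ?_⟩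
  have hUg : dotp g (y - x) = (-c)⁻¹ * U (y - x) := by
    have : dotp g (y - x) = (-c)⁻¹ * dotp (fun i => U (Pi.single i 1)) (y - x) := by
      unfold dotp
      rw [Finset.mul_sum]
      refine Finset.sum_congr rfl fun i _ => by
        simp [hgdef, mul_assoc]
    rw [this, dotp_single_expand _ _ U (fun i => rfl)]
  rw [hUg]
  have hkey : ∀ ε > (0:ℝ), Om x + (-c)⁻¹ * U (y - x) ≤ Om y + ε := by
    intro ε hε
    have h1 := hf (y, Om y + ε) (by simp [hA, hε])
    rw [hsplit y (Om y + ε), hsplit x (Om x)] at h1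
    have hU' : U (y - x) = U y - U x := by rw [map_sub]
    have hUy : U y = f (y, 0) := rfl
    have hUx : U x = f (x, 0) := rfl
    have hcpos : 0 < -c := by linarith
    rw [hU', hUy, hUx]
    have h3 : (-c)⁻¹ * (f (y, 0) - f (x, 0)) ≤ Om y + ε - Om x := by
      rw [inv_mul_le_iff₀ hcpos]
      nlinarith
    linarith
  have := le_of_forall_pos_le_add hkey
  linarith


section StrongConvex

variable {N : (Fin n → ℝ) → ℝ} {Om : (Fin n → ℝ) → ℝ}

/-- Two-point form of strong convexity. -/
lemma two_point (hNh : ∀ (c : ℝ) (x), N (c • x) = |c| * N x)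
    (hOm : ConvexOn ℝ Set.univ Om)
    (hsc : ∀ x y g, g ∈ subgrad Om x → Om x + dotp g (y - x) + N (y - x) ^ 2 / 2 ≤ Om y)
    (x y : Fin n → ℝ) {a b : ℝ} (ha : 0 ≤ a) (hb : 0 ≤ b) (hab : a + b = 1) :
    Om (a • x + b • y) + a * b * N (x - y) ^ 2 / 2 ≤ a * Om x + b * Om y := by
  obtain ⟨g, hg⟩ := exists_subgrad Om hOm (a • x + b • y)
  set m := a • x + b • y with hm
  have h1 := hsc m x g hg
  have h2 := hsc m y g hg
  have ha' : a = 1 - b := by linarith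
  have hxm : x - m = b • (x - y) := by
    funext i
    simp only [hm, Pi.sub_apply, Pi.add_apply, Pi.smul_apply, smul_eq_mul, ha']
    ring
  have hym : y - m = a • (y - x) := by
    funext i
    simp only [hm, Pi.sub_apply, Pi.add_apply, Pi.smul_apply, smul_eq_mul, ha']
    ring
  have hyx : y - x = (-1 : ℝ) • (x - y) := by
    funext i
    simp only [Pi.sub_apply, Pi.smul_apply, smul_eq_mul]
    ring
  have hNyx : N (y - x) = N (x - y) := by rw [hyx, hNh]; simp
  have e1 : N (x - m) ^ 2 = b ^ 2 * N (x - y) ^ 2 := by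
    rw [hxm, hNh, abs_of_nonneg hb]; ring
  have e2 : N (y - m) ^ 2 = a ^ 2 * N (x - y) ^ 2 := by
    rw [hym, hNh, abs_of_nonneg ha, hNyx]; ring
  have d1 : dotp g (x - m) = b * (dotp g x - dotp g y) := by
    rw [hxm, dotp_smul_right, dotp_sub_right]
  have d2 : dotp g (y - m) = a * (dotp g y - dotp g x) := by
    rw [hym, dotp_smul_right, dotp_sub_right]
  rw [e1, d1] at h1
  rw [e2, d2] at h2
  have H := add_le_add (mul_le_mul_of_nonneg_left h1 ha) (mul_le_mul_of_nonneg_left h2 hb)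
  have hiden : Om m + a * b * N (x - y) ^ 2 / 2 =
      a * (Om m + b * (dotp g x - dotp g y) + b ^ 2 * N (x - y) ^ 2 / 2) +
      b * (Om m + a * (dotp g y - dotp g x) + a ^ 2 * N (x - y) ^ 2 / 2) := by
    linear_combination (-(Om m + a * b * N (x - y) ^ 2 / 2)) * hab
  linarith [H, hiden]

/-- Quadratic growth at the maximizer. -/
lemma quad_growth (σ : Fin n → ℝ)
    (hNh : ∀ (c : ℝ) (x), N (c • x) = |c| * N x)
    (hOm : ConvexOn ℝ Set.univ Om)
    (hsc : ∀ x y g, g ∈ subgrad Om x → Om x + dotp g (y - x) + N (y - x) ^ 2 / 2 ≤ Om y)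
    {ν : ℝ} (hν : 0 < ν) (l lam : Fin n → ℝ) (hmem : lam ∈ permutahedron σ)
    (hmax : IsMaxOn (fun x => dotp x l - ν * Om x) (permutahedron σ) lam) :
    ∀ y ∈ permutahedron σ,
      dotp y l - ν * Om y + ν * N (lam - y) ^ 2 / 2 ≤ dotp lam l - ν * Om lam := by
  intro y hy
  set K := N (lam - y) ^ 2 with hK
  have hK0 : 0 ≤ K := sq_nonneg _
  have step : ∀ t ∈ Set.Ioo (0:ℝ) 1,
      dotp y l - ν * Om y + ν * (1 - t) * K / 2 ≤ dotp lam l - ν * Om lam := by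
    rintro t ⟨ht0, ht1⟩
    set z := (1 - t) • lam + t • y with hz
    have hzP : z ∈ permutahedron σ :=
      perm_convex σ hmem hy (by linarith) (le_of_lt ht0) (by ring)
    have h1 : dotp z l - ν * Om z ≤ dotp lam l - ν * Om lam := (isMaxOn_iff.mp hmax) z hzP
    have h2 := two_point hNh hOm hsc lam y (by linarith : (0:ℝ) ≤ 1 - t) (le_of_lt ht0)
      (by ring)
    rw [← hz, ← hK] at h2
    have hzl : dotp z l = (1 - t) * dotp lam l + t * dotp y l := by
      rw [dotp_comm, hz, dotp_add_right, dotp_smul_right, dotp_smul_right,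
        dotp_comm l lam, dotp_comm l y]
    have h2' := mul_le_mul_of_nonneg_left h2 (le_of_lt hν)
    rw [hzl] at h1
    have hmain : t * (dotp y l - ν * Om y + ν * (1 - t) * K / 2) ≤
        t * (dotp lam l - ν * Om lam) := by nlinarith [h1, h2']
    exact le_of_mul_le_mul_left hmain ht0
  have htend : Filter.Tendsto (fun t : ℝ => dotp y l - ν * Om y + ν * (1 - t) * K / 2)
      (nhdsWithin 0 (Set.Ioi 0)) (nhds (dotp y l - ν * Om y + ν * K / 2)) := by
    have hc : Continuous fun t : ℝ => dotp y l - ν * Om y + ν * (1 - t) * K / 2 := by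
      continuity
    have := (hc.tendsto 0).mono_left (nhdsWithin_le_nhds (s := Set.Ioi (0:ℝ)))
    simpa using this
  have hev : ∀ᶠ t in nhdsWithin (0:ℝ) (Set.Ioi 0),
      (fun t : ℝ => dotp y l - ν * Om y + ν * (1 - t) * K / 2) t ≤
        dotp lam l - ν * Om lam := by
    filter_upwards [Ioo_mem_nhdsGT_of_mem (Set.mem_Ico.mpr ⟨le_refl (0:ℝ), zero_lt_one⟩)]
      with t ht
    exact step t ht
  have := le_of_tendsto htend hev
  linarith

end StrongConvex


section DualNorm

variable {N : (Fin n → ℝ) → ℝ}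

lemma N_zero (hNh : ∀ (c : ℝ) (x), N (c • x) = |c| * N x) : N 0 = 0 := by
  have := hNh 0 0
  simpa using this

lemma N_sum (hNz : N 0 = 0) (hNt : ∀ x y, N (x + y) ≤ N x + N y)
    (s : Finset (Fin n)) (f : Fin n → (Fin n → ℝ)) :
    N (∑ i ∈ s, f i) ≤ ∑ i ∈ s, N (f i) := by
  classical
  induction s using Finset.induction_on with
  | empty => simp [hNz]
  | insert a s hnot ih =>
      rw [Finset.sum_insert hnot, Finset.sum_insert hnot]
      exact (hNt _ _).trans (by linarith)

lemma N_le_const (hNz : N 0 = 0) (hN0 : ∀ x, 0 ≤ N x)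
    (hNh : ∀ (c : ℝ) (x), N (c • x) = |c| * N x)
    (hNt : ∀ x y, N (x + y) ≤ N x + N y) (x : Fin n → ℝ) :
    N x ≤ (∑ i, N (Pi.single i 1)) * ‖x‖ := by
  have hx : x = ∑ i, x i • (Pi.single i (1:ℝ) : Fin n → ℝ) := by
    funext j
    simp [Finset.sum_apply, Pi.single_apply]
  calc N x = N (∑ i, x i • (Pi.single i (1:ℝ) : Fin n → ℝ)) := by rw [← hx]
    _ ≤ ∑ i, N (x i • (Pi.single i (1:ℝ) : Fin n → ℝ)) := N_sum hNz hNt _ _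
    _ = ∑ i, |x i| * N (Pi.single i 1) := by simp [hNh]
    _ ≤ ∑ i, ‖x‖ * N (Pi.single i 1) := by
        refine Finset.sum_le_sum fun i _ => ?_
        exact mul_le_mul_of_nonneg_right (norm_le_pi_norm x i) (hN0 _)
    _ = (∑ i, N (Pi.single i 1)) * ‖x‖ := by
        rw [Finset.sum_mul]
        exact Finset.sum_congr rfl fun i _ => mul_comm _ _

lemma N_continuous (hNz : N 0 = 0) (hN0 : ∀ x, 0 ≤ N x)
    (hNh : ∀ (c : ℝ) (x), N (c • x) = |c| * N x)
    (hNt : ∀ x y, N (x + y) ≤ N x + N y) : Continuous N := by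
  set D := ∑ i, N (Pi.single i (1:ℝ)) with hD
  have hD0 : 0 ≤ D := Finset.sum_nonneg fun i _ => hN0 _
  have hlip : ∀ x y : Fin n → ℝ, N x - N y ≤ D * ‖x - y‖ := by
    intro x y
    have h1 : N x ≤ N y + N (x - y) := by
      have := hNt y (x - y)
      simpa using this
    have h2 := N_le_const hNz hN0 hNh hNt (x - y)
    linarith
  refine (LipschitzWith.of_dist_le_mul (K := D.toNNReal) (f := N) fun x y => ?_).continuous
  rw [Real.dist_eq, Real.coe_toNNReal D hD0, dist_eq_norm]
  rw [abs_sub_le_iff]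
  constructor
  · exact hlip x y
  · have := hlip y x
    rwa [show y - x = -(x - y) by ring, norm_neg] at this

/-- A norm is bounded below by a positive multiple of the sup norm. -/
lemma N_lower [Nonempty (Fin n)] (hN0 : ∀ x, 0 ≤ N x) (hNd : ∀ x, N x = 0 → x = 0)
    (hNh : ∀ (c : ℝ) (x), N (c • x) = |c| * N x)
    (hNt : ∀ x y, N (x + y) ≤ N x + N y) :
    ∃ c > (0:ℝ), ∀ x, c * ‖x‖ ≤ N x := by
  have hNz : N 0 = 0 := N_zero hNh
  have hcont := N_continuous hNz hN0 hNh hNt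
  have hsph : (Metric.sphere (0 : Fin n → ℝ) 1).Nonempty := by
    refine ⟨fun _ => 1, ?_⟩
    rw [Metric.mem_sphere, dist_zero_right]
    simp
  obtain ⟨x₀, hx₀mem, hx₀min⟩ :=
    (isCompact_sphere (0 : Fin n → ℝ) 1).exists_isMinOn hsph hcont.continuousOn
  have hx₀norm : ‖x₀‖ = 1 := by simpa [dist_zero_right] using hx₀mem
  have hx₀ne : x₀ ≠ 0 := by
    intro h
    rw [h, norm_zero] at hx₀norm
    norm_num at hx₀norm
  have hc0 : 0 < N x₀ := by
    rcases lt_or_eq_of_le (hN0 x₀) with h | h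
    · exact h
    · exact absurd (hNd x₀ h.symm) hx₀ne
  refine ⟨N x₀, hc0, fun x => ?_⟩
  rcases eq_or_ne x 0 with rfl | hx
  · simp [hNz]
  · have hxn : 0 < ‖x‖ := norm_pos_iff.mpr hx
    have hmem : ‖x‖⁻¹ • x ∈ Metric.sphere (0 : Fin n → ℝ) 1 := by
      rw [Metric.mem_sphere, dist_zero_right, norm_smul, norm_inv, norm_norm]
      field_simp
    have h1 : N x₀ ≤ N (‖x‖⁻¹ • x) := (isMinOn_iff.mp hx₀min) _ hmem
    rw [hNh, abs_of_nonneg (inv_nonneg.mpr hxn.le)] at h1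
    calc N x₀ * ‖x‖ ≤ ‖x‖⁻¹ * N x * ‖x‖ := by
          exact mul_le_mul_of_nonneg_right h1 hxn.le
      _ = N x := by field_simp

lemma dual_bddAbove (hN0 : ∀ x, 0 ≤ N x) (hNd : ∀ x, N x = 0 → x = 0)
    (hNh : ∀ (c : ℝ) (x), N (c • x) = |c| * N x)
    (hNt : ∀ x y, N (x + y) ≤ N x + N y) (z : Fin n → ℝ) :
    BddAbove ((fun x => dotp z x) '' {x | N x ≤ 1}) := by
  rcases isEmpty_or_nonempty (Fin n) with hn | hn
  · refine ⟨0, ?_⟩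
    rintro _ ⟨x, hx, rfl⟩
    simp [dotp]
  · obtain ⟨c, hc0, hc⟩ := N_lower hN0 hNd hNh hNt
    refine ⟨(∑ i, |z i|) * c⁻¹, ?_⟩
    rintro _ ⟨x, hx, rfl⟩
    have hx1 : N x ≤ 1 := hx
    have hxle : ‖x‖ ≤ c⁻¹ := by
      rw [← one_div]
      rw [le_div_iff₀ hc0]
      nlinarith [hc x]
    calc dotp z x ≤ |dotp z x| := le_abs_self _
      _ ≤ ∑ i, |z i| * |x i| := abs_dotp_le z x
      _ ≤ ∑ i, |z i| * ‖x‖ := by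
          refine Finset.sum_le_sum fun i _ => ?_
          have : |x i| ≤ ‖x‖ := by
            have := norm_le_pi_norm x i
            simpa [Real.norm_eq_abs] using this
          exact mul_le_mul_of_nonneg_left this (abs_nonneg _)
      _ = (∑ i, |z i|) * ‖x‖ := (Finset.sum_mul _ _ _).symm
      _ ≤ (∑ i, |z i|) * c⁻¹ :=
          mul_le_mul_of_nonneg_left hxle
            (Finset.sum_nonneg fun i _ => abs_nonneg _)


lemma dualNorm_nonneg (hN0 : ∀ x, 0 ≤ N x) (hNd : ∀ x, N x = 0 → x = 0)
    (hNh : ∀ (c : ℝ) (x), N (c • x) = |c| * N x)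
    (hNt : ∀ x y, N (x + y) ≤ N x + N y) (z : Fin n → ℝ) : 0 ≤ dualNorm N z := by
  have hmem : (0 : Fin n → ℝ) ∈ {x | N x ≤ 1} := by
    simp [Set.mem_setOf_eq, N_zero hNh]
  have := le_csSup (dual_bddAbove hN0 hNd hNh hNt z) ⟨0, hmem, rfl⟩
  simpa [dotp_zero_right, dualNorm] using this

lemma dotp_le_dualNorm (hN0 : ∀ x, 0 ≤ N x) (hNd : ∀ x, N x = 0 → x = 0)
    (hNh : ∀ (c : ℝ) (x), N (c • x) = |c| * N x)
    (hNt : ∀ x y, N (x + y) ≤ N x + N y) (z w : Fin n → ℝ) :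
    dotp z w ≤ N w * dualNorm N z := by
  rcases eq_or_lt_of_le (hN0 w) with h | h
  · have hw : w = 0 := hNd w h.symm
    rw [hw, dotp_zero_right, N_zero hNh, zero_mul]
  · have hw' : N ((N w)⁻¹ • w) ≤ 1 := by
      rw [hNh, abs_of_nonneg (inv_nonneg.mpr (hN0 w))]
      rw [inv_mul_cancel₀ (ne_of_gt h)]
    have hmem := le_csSup (dual_bddAbove hN0 hNd hNh hNt z) ⟨(N w)⁻¹ • w, hw', rfl⟩
    have hrw : dotp z w = N w * dotp z ((N w)⁻¹ • w) := by
      rw [dotp_smul_right, ← mul_assoc, mul_inv_cancel₀ (ne_of_gt h), one_mul]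
    rw [hrw]
    exact mul_le_mul_of_nonneg_left hmem (hN0 w)

end DualNorm

/-- Existence of a maximizer. -/
lemma exists_max (σ : Fin n → ℝ) (Om : (Fin n → ℝ) → ℝ) (hOm : ConvexOn ℝ Set.univ Om)
    (ν : ℝ) (l : Fin n → ℝ) :
    ∃ lam, lam ∈ permutahedron σ ∧
      IsMaxOn (fun x => dotp x l - ν * Om x) (permutahedron σ) lam := by
  have hcont : Continuous fun x : Fin n → ℝ => dotp x l - ν * Om x := by
    have h1 : Continuous fun x : Fin n → ℝ => dotp x l := by
      unfold dotp
      exact continuous_finset_sum _ fun i _ => (continuous_apply i).mul continuous_const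
    have h2 : Continuous Om :=
      continuousOn_univ.mp (hOm.continuousOn isOpen_univ)
    exact h1.sub (continuous_const.mul h2)
  obtain ⟨lam, hmem, hmax⟩ := (perm_compact σ).exists_isMaxOn (permutahedron_nonempty σ)
    hcont.continuousOn
  exact ⟨lam, hmem, hmax⟩

end Stmt12Aux

theorem stmt12 {n : ℕ} (σ : Fin n → ℝ) (hσ_nonneg : ∀ i, 0 ≤ σ i)
    (Om : (Fin n → ℝ) → ℝ) (ν : ℝ) (hν : 0 < ν) :
    (∀ p q : ℝ≥0∞, 1 ≤ p → 1 / p + 1 / q = 1 → ∀ l l' : Fin n → ℝ,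
      |smoothedMax σ Om ν l - smoothedMax σ Om ν l'| ≤
        ‖(WithLp.equiv p (Fin n → ℝ)).symm σ‖ *
          ‖(WithLp.equiv q (Fin n → ℝ)).symm (l - l')‖) ∧
    (∀ N : (Fin n → ℝ) → ℝ,
      (∀ x, 0 ≤ N x) →
      (∀ x, N x = 0 → x = 0) →
      (∀ (c : ℝ) (x), N (c • x) = |c| * N x) →
      (∀ x y, N (x + y) ≤ N x + N y) →
      ConvexOn ℝ Set.univ Om →
      (∀ x y g, g ∈ subgrad Om x → Om x + dotp g (y - x) + N (y - x) ^ 2 / 2 ≤ Om y) →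
      (∀ l : Fin n → ℝ, ∃! lam, lam ∈ permutahedron σ ∧
        IsMaxOn (fun x => dotp x l - ν * Om x) (permutahedron σ) lam) ∧
      (∀ (l l' lam lam' : Fin n → ℝ),
        lam ∈ permutahedron σ →
        IsMaxOn (fun x => dotp x l - ν * Om x) (permutahedron σ) lam →
        lam' ∈ permutahedron σ →
        IsMaxOn (fun x => dotp x l' - ν * Om x) (permutahedron σ) lam' →
        N (lam - lam') ≤ dualNorm N (l - l') / ν)) := by
  constructor
  · intro p q hp hpq l l'
    exact Stmt12Aux.part_one hσ_nonneg Om ν p q hp hpq l l'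
  · intro N hN0 hNd hNh hNt hOm hsc
    have key : ∀ (l l' lam lam' : Fin n → ℝ),
        lam ∈ permutahedron σ →
        IsMaxOn (fun x => dotp x l - ν * Om x) (permutahedron σ) lam →
        lam' ∈ permutahedron σ →
        IsMaxOn (fun x => dotp x l' - ν * Om x) (permutahedron σ) lam' →
        ν * N (lam - lam') ^ 2 ≤ dotp (l - l') (lam - lam') := by
      intro l l' lam lam' hm hmax hm' hmax'
      have h1 := Stmt12Aux.quad_growth σ hNh hOm hsc hν l lam hm hmax lam' hm'
      have h2 := Stmt12Aux.quad_growth σ hNh hOm hsc hν l' lam' hm' hmax' lam hm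
      have hsym : N (lam' - lam) = N (lam - lam') := by
        have : lam' - lam = (-1 : ℝ) • (lam - lam') := by
          funext i
          simp only [Pi.sub_apply, Pi.smul_apply, smul_eq_mul]
          ring
        rw [this, hNh]; simp
      rw [hsym] at h2
      have hd : dotp (l - l') (lam - lam') =
          (dotp lam l - dotp lam' l) + (dotp lam' l' - dotp lam l') := by
        simp only [dotp, ← Finset.sum_sub_distrib, ← Finset.sum_add_distrib,
          Pi.sub_apply]
        exact Finset.sum_congr rfl fun i _ => by ring
      rw [hd]
      linarith
    have hNsym : ∀ a b : Fin n → ℝ, N (a - b) = N (b - a) := by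
      intro a b
      have : a - b = (-1 : ℝ) • (b - a) := by
        funext i
        simp only [Pi.sub_apply, Pi.smul_apply, smul_eq_mul]
        ring
      rw [this, hNh]; simp
    constructor
    · intro l
      obtain ⟨lam, hmem, hmax⟩ := Stmt12Aux.exists_max σ Om hOm ν l
      refine ⟨lam, ⟨hmem, hmax⟩, ?_⟩
      rintro lam' ⟨hmem', hmax'⟩
      have h := key l l lam' lam hmem' hmax' hmem hmax
      simp only [sub_self, Stmt12Aux.dotp_comm] at h
      have hz : dotp (lam' - lam) 0 = 0 := Stmt12Aux.dotp_zero_right _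
      rw [hz] at h
      have hN2 : N (lam' - lam) ^ 2 ≤ 0 := by nlinarith
      have hNz : N (lam' - lam) = 0 := by nlinarith [hN0 (lam' - lam), sq_nonneg (N (lam' - lam))]
      have := hNd _ hNz
      have : lam' = lam := by
        funext i
        have h0 := congrFun this i
        simp only [Pi.sub_apply, Pi.zero_apply] at h0
        linarith
      exact this
    · intro l l' lam lam' hm hmax hm' hmax'
      have h := key l l' lam lam' hm hmax hm' hmax'
      have hdual := Stmt12Aux.dotp_le_dualNorm hN0 hNd hNh hNt (l - l') (lam - lam')
      have hdn := Stmt12Aux.dualNorm_nonneg hN0 hNd hNh hNt (l - l')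
      rcases eq_or_lt_of_le (hN0 (lam - lam')) with hz | hz
      · rw [← hz]
        positivity
      · have hineq : ν * N (lam - lam') ^ 2 ≤ N (lam - lam') * dualNorm N (l - l') :=
          h.trans hdual
        rw [le_div_iff₀ hν]
        nlinarith
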